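/- Let E be a finite directed graph and p a function from the edges of E to the positive integers, extended multiplicatively to paths (p of a path is the product of p over its edges; p of a trivial path is 1). Let ℤE* be the free abelian group on the set of all paths of E (including trivial paths), and let Δ be the homomorphism from the free abelian group on the set of composable pairs of paths (μ, ν) (with source(μ) = range(ν)) to ℤE* given by Δ(μ, ν) = ν − μν + p(ν)·μ, where μν denotes concatenation. Then ℤE* is the internal direct sum of the subgroup ℤE¹ generated by the paths of length one and the image of Δ: ℤE* = ℤE¹ + im(Δ) and im(Δ) ∩ ℤE¹ = {0}. -/

import Mathlib

universe v u

/-- The multiplicative extension of an edge-weighting `p` to paths: `p` of a path is the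
product of `p` over its edges, and `p` of a trivial path is `1`. -/
def pathWeight {V : Type u} [Quiver.{v + 1} V] (p : ∀ {a b : V}, (a ⟶ b) → ℕ) :
    ∀ {a b : V}, Quiver.Path a b → ℕ
  | _, _, Quiver.Path.nil => 1
  | _, _, Quiver.Path.cons q e => pathWeight p q * p e

lemma pathWeight_nil {V : Type u} [Quiver.{v + 1} V] (p : ∀ {a b : V}, (a ⟶ b) → ℕ)
    (a : V) : pathWeight p (Quiver.Path.nil : Quiver.Path a a) = 1 := by
  simp [pathWeight]

lemma pathWeight_cons {V : Type u} [Quiver.{v + 1} V] (p : ∀ {a b : V}, (a ⟶ b) → ℕ)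
    {a m b : V} (q : Quiver.Path a m) (e : m ⟶ b) :
    pathWeight p (q.cons e) = pathWeight p q * p e := by
  simp [pathWeight]

lemma pathWeight_comp {V : Type u} [Quiver.{v + 1} V] (p : ∀ {a b : V}, (a ⟶ b) → ℕ)
    {a b c : V} (ν : Quiver.Path a b) (μ : Quiver.Path b c) :
    pathWeight p (ν.comp μ) = pathWeight p ν * pathWeight p μ := by
  induction μ with
  | nil => simp [pathWeight]
  | cons q e ih =>
      show pathWeight p ((ν.comp q).cons e) = _
      simp [pathWeight, ih, mul_assoc]

/-- Auxiliary map: `phiPath q` replaces a path `q = e₁⋯eₙ` by the weighted sum of its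
edges. -/
noncomputable def phiPath {V : Type u} [Quiver.{v + 1} V] (p : ∀ {a b : V}, (a ⟶ b) → ℕ) :
    ∀ {a b : V}, Quiver.Path a b → ((Σ a b : V, Quiver.Path a b) →₀ ℤ)
  | _, _, Quiver.Path.nil => 0
  | _, _, Quiver.Path.cons q e =>
      phiPath p q + (pathWeight p q : ℤ) • Finsupp.single ⟨_, _, e.toPath⟩ 1

lemma phiPath_nil {V : Type u} [Quiver.{v + 1} V] (p : ∀ {a b : V}, (a ⟶ b) → ℕ)
    (a : V) : phiPath p (Quiver.Path.nil : Quiver.Path a a) = 0 := by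
  simp [phiPath]

lemma phiPath_cons {V : Type u} [Quiver.{v + 1} V] (p : ∀ {a b : V}, (a ⟶ b) → ℕ)
    {a m b : V} (q : Quiver.Path a m) (e : m ⟶ b) :
    phiPath p (q.cons e)
      = phiPath p q + (pathWeight p q : ℤ) • Finsupp.single ⟨m, b, e.toPath⟩ 1 := by
  simp [phiPath]

lemma phiPath_comp {V : Type u} [Quiver.{v + 1} V] (p : ∀ {a b : V}, (a ⟶ b) → ℕ)
    {a b c : V} (ν : Quiver.Path a b) (μ : Quiver.Path b c) :
    phiPath p (ν.comp μ) = phiPath p ν + (pathWeight p ν : ℤ) • phiPath p μ := by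
  induction μ with
  | nil => simp [phiPath_nil]
  | cons q e ih =>
      show phiPath p ((ν.comp q).cons e) = _
      rw [phiPath_cons, ih, pathWeight_comp, phiPath_cons]
      push_cast
      rw [smul_add, mul_smul]
      abel

theorem freeAbelianPaths_internal_direct_sum
    (V : Type u) [Quiver.{v + 1} V] [Fintype V] [∀ a b : V, Fintype (a ⟶ b)]
    (p : ∀ {a b : V}, (a ⟶ b) → ℕ) (hp : ∀ {a b : V} (e : a ⟶ b), 1 ≤ p e) :
    -- `ℤE*`, the free abelian group on all paths (a path `ν : Path a b` has source `a`
    -- and range `b`); composable pairs `(μ, ν)` with `source(μ) = range(ν)` are encoded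
    -- as `⟨a, b, c, (ν, μ)⟩` with `ν : Path a b`, `μ : Path b c`, concatenation `ν.comp μ`.
    let ZEstar := ((Σ a b : V, Quiver.Path a b) →₀ ℤ)
    let Δ : ((Σ a b c : V, Quiver.Path a b × Quiver.Path b c) →₀ ℤ) →+ ZEstar :=
      Finsupp.liftAddHom (fun q =>
        (zmultiplesHom ZEstar)
          (Finsupp.single ⟨q.1, q.2.1, q.2.2.2.1⟩ 1
            - Finsupp.single ⟨q.1, q.2.2.1, q.2.2.2.1.comp q.2.2.2.2⟩ 1
            + (pathWeight p q.2.2.2.1 : ℤ) • Finsupp.single ⟨q.2.1, q.2.2.1, q.2.2.2.2⟩ 1))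
    let ZE1 : AddSubgroup ZEstar :=
      AddSubgroup.closure
        {f | ∃ x : Σ a b : V, Quiver.Path a b, x.2.2.length = 1 ∧ f = Finsupp.single x 1}
    ZE1 ⊔ Δ.range = ⊤ ∧ Δ.range ⊓ ZE1 = ⊥ := by
  intro ZEstar Δ ZE1
  -- the retraction φ
  set φ : ZEstar →+ ZEstar :=
    Finsupp.liftAddHom (fun x => (zmultiplesHom ZEstar) (phiPath p x.2.2)) with hφ
  have hφsingle : ∀ x : Σ a b : V, Quiver.Path a b,
      φ (Finsupp.single x 1) = phiPath p x.2.2 := by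
    intro x
    rw [hφ, Finsupp.liftAddHom_apply_single]
    simp
  have hΔsingle : ∀ x : Σ a b c : V, Quiver.Path a b × Quiver.Path b c,
      Δ (Finsupp.single x 1) =
        Finsupp.single ⟨x.1, x.2.1, x.2.2.2.1⟩ 1
          - Finsupp.single ⟨x.1, x.2.2.1, x.2.2.2.1.comp x.2.2.2.2⟩ 1
          + (pathWeight p x.2.2.2.1 : ℤ) • Finsupp.single ⟨x.2.1, x.2.2.1, x.2.2.2.2⟩ 1 := by
    intro x
    show Finsupp.liftAddHom _ _ = _
    rw [Finsupp.liftAddHom_apply_single]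
    simp
  -- φ kills the image of Δ
  have hφΔ : ∀ z, φ (Δ z) = 0 := by
    intro z
    induction z using Finsupp.induction_linear with
    | zero => simp
    | add f g hf hg => rw [map_add, map_add, hf, hg, add_zero]
    | single x n =>
        obtain ⟨a, b, c, ν, μ⟩ := x
        have h1 : (Finsupp.single (⟨a, b, c, (ν, μ)⟩ :
            Σ a b c : V, Quiver.Path a b × Quiver.Path b c) n)
            = n • Finsupp.single ⟨a, b, c, (ν, μ)⟩ 1 := by simp
        rw [h1, map_zsmul, map_zsmul, hΔsingle ⟨a, b, c, (ν, μ)⟩, map_add, map_sub,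
          map_zsmul, hφsingle ⟨a, b, ν⟩, hφsingle ⟨a, c, ν.comp μ⟩, hφsingle ⟨b, c, μ⟩]
        show n • (phiPath p ν - phiPath p (ν.comp μ)
          + (pathWeight p ν : ℤ) • phiPath p μ) = 0
        rw [phiPath_comp]
        rw [show phiPath p ν - (phiPath p ν + (pathWeight p ν : ℤ) • phiPath p μ)
              + (pathWeight p ν : ℤ) • phiPath p μ = 0 by abel, smul_zero]
  -- φ fixes ZE1 pointwise
  have hφZE1 : ∀ x ∈ ZE1, φ x = x := by
    intro x hx
    refine AddSubgroup.closure_induction ?_ (by simp) ?_ ?_ hx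
    · rintro f ⟨⟨a, b, q⟩, hlen, rfl⟩
      simp only at hlen
      cases q with
      | nil => simp [Quiver.Path.length] at hlen
      | cons q' e =>
        cases q' with
        | cons q'' e' => simp [Quiver.Path.length] at hlen
        | nil =>
          rw [hφsingle]
          show phiPath p (Quiver.Path.nil.cons e) = _
          rw [phiPath_cons, phiPath_nil, pathWeight_nil]
          push_cast
          rw [one_smul, zero_add]
          rfl
    · intro f g _ _ hf hg
      rw [map_add, hf, hg]
    · intro f _ hf
      rw [map_neg, hf]
  -- every basis vector lies in the sup
  have hmem : ∀ (a b : V) (q : Quiver.Path a b),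
      (Finsupp.single ⟨a, b, q⟩ 1 : ZEstar) ∈ ZE1 ⊔ Δ.range := by
    intro a b q
    induction q with
    | nil =>
        refine AddSubgroup.mem_sup_right ⟨Finsupp.single ⟨a, a, a,
          (Quiver.Path.nil, Quiver.Path.nil)⟩ 1, ?_⟩
        rw [hΔsingle]
        simp only [Quiver.Path.comp_nil, pathWeight_nil, Nat.cast_one, one_smul]
        abel
    | @cons m c q e ih =>
        have key : (Finsupp.single ⟨a, c, q.cons e⟩ 1 : ZEstar) =
            Finsupp.single ⟨a, m, q⟩ 1
              + (pathWeight p q : ℤ) • Finsupp.single ⟨m, c, e.toPath⟩ 1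
              - Δ (Finsupp.single ⟨a, m, c, (q, e.toPath)⟩ 1) := by
          rw [hΔsingle]
          simp only
          rw [show q.comp e.toPath = q.cons e from rfl]
          abel
        rw [key]
        refine sub_mem (add_mem ih ?_) (AddSubgroup.mem_sup_right ⟨_, rfl⟩)
        refine zsmul_mem (AddSubgroup.mem_sup_left ?_) _
        exact AddSubgroup.subset_closure ⟨⟨m, c, e.toPath⟩, rfl, rfl⟩
  constructor
  · -- sup = ⊤
    rw [eq_top_iff]
    intro f hf
    clear hf
    induction f using Finsupp.induction_linear with
    | zero => exact zero_mem _
    | add f g hf hg => exact add_mem hf hg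
    | single x n =>
        have h1 : (Finsupp.single x n : ZEstar) = n • Finsupp.single x 1 := by simp
        rw [h1]
        exact zsmul_mem (hmem x.1 x.2.1 x.2.2) n
  · -- inf = ⊥
    rw [eq_bot_iff]
    rintro x ⟨⟨z, rfl⟩, hx1⟩
    rw [AddSubgroup.mem_bot, ← hφZE1 _ hx1, hφΔ]
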